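/- arXiv:2508.04262 — 4 statements merged into one kernel-verified Lean document; each statement's English description precedes it below -/
import Mathlib

section
/- Let q ≥ 16 and m ≥ 3 be integers. Define A = (1/2)((q^m-1)/(q-1))^2, B = ((q^m-1)/(2(q-1)^2(q+1)))(4q^{m-1} - q^{m+1} - q^m + q - 3), C = -(q^{2m} + q^m + 1), and Δ = B^2 - 4AC. Then 7q^{2m+4}(q^m-1)^2/(4(q-1)^4(q+1)^2) ≤ Δ ≤ q^{2m+5}(q^m-1)^2/(8(q-1)^4(q+1)^2). -/
lemma key1 (Q x : ℝ) (hQ : 16 ≤ Q) (hx : 0 ≤ x) (E : ℝ) :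
    7 * Q ^ 4 * x ^ 2 ≤ E ^ 2 + 8 * (Q - 1) ^ 2 * (Q + 1) ^ 2 * (x ^ 2 + x + 1) := by
  have h1 : 0 ≤ Q ^ 4 - 16 * Q ^ 2 + 8 := by
    nlinarith [mul_nonneg (show (0:ℝ) ≤ Q ^ 2 - 16 by nlinarith) (sq_nonneg Q)]
  have h2 : 0 ≤ 8 * (Q - 1) ^ 2 * (Q + 1) ^ 2 := by positivity
  nlinarith [sq_nonneg E, mul_nonneg h1 (sq_nonneg x), mul_nonneg h2 hx]

lemma key2 (Q y : ℝ) (hQ : 16 ≤ Q) (hy : Q ^ 2 ≤ y) :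
    (4 * y - Q * (Q * y) - Q * y + Q - 3) ^ 2
      + 8 * (Q - 1) ^ 2 * (Q + 1) ^ 2 * ((Q * y) ^ 2 + Q * y + 1)
      ≤ Q ^ 5 * (Q * y) ^ 2 / 2 := by
  have hQ0 : (0:ℝ) < Q := by linarith
  have hy0 : (0:ℝ) < y := by nlinarith
  have h16 : 16 * Q ≤ y := by nlinarith
  have hQy : Q ≤ y := by nlinarith
  have t0 : 0 ≤ Q ^ 6 * (Q - 16) * y ^ 2 := by
    have : (0:ℝ) ≤ Q - 16 := by linarith
    positivity
  have t1 : 16 * Q ^ 5 * y ≤ Q ^ 4 * y ^ 2 := by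
    nlinarith [mul_le_mul_of_nonneg_left h16 (show (0:ℝ) ≤ Q ^ 4 * y by positivity)]
  have t2 : Q ^ 4 ≤ y ^ 2 := by nlinarith [mul_le_mul_of_nonneg_left hy (sq_nonneg Q)]
  have t3 : Q * y ≤ y ^ 2 := by nlinarith
  have t4 : 16 * Q ^ 3 * y ^ 2 ≤ Q ^ 4 * y ^ 2 := by nlinarith [mul_nonneg (mul_nonneg (show (0:ℝ) ≤ Q - 16 by linarith) (pow_nonneg hQ0.le 3)) (sq_nonneg y)]
  set E := 4 * y - Q * (Q * y) - Q * y + Q - 3 with hE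
  have hE1 : E ≤ 0 := by nlinarith
  have hE2 : -(Q ^ 2 * y + Q * y) ≤ E := by nlinarith
  have hEsq : E ^ 2 ≤ (Q ^ 2 * y + Q * y) ^ 2 := by nlinarith
  nlinarith [hEsq, t0, t1, t2, t3, t4, sq_nonneg y, mul_pos hQ0 hy0, sq_nonneg Q]

/-- bounds on the discriminant Δ for q ≥ 16, m ≥ 3. -/
theorem stmt2 (q m : ℕ) (hq : 16 ≤ q) (hm : 3 ≤ m)
    (A B C Δ : ℝ)
    (hA : A = (1 / 2) * (((q : ℝ) ^ m - 1) / ((q : ℝ) - 1)) ^ 2)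
    (hB : B = (((q : ℝ) ^ m - 1) / (2 * ((q : ℝ) - 1) ^ 2 * ((q : ℝ) + 1))) *
      (4 * (q : ℝ) ^ (m - 1) - (q : ℝ) ^ (m + 1) - (q : ℝ) ^ m + (q : ℝ) - 3))
    (hC : C = -((q : ℝ) ^ (2 * m) + (q : ℝ) ^ m + 1))
    (hΔ : Δ = B ^ 2 - 4 * A * C) :
    7 * (q : ℝ) ^ (2 * m + 4) * ((q : ℝ) ^ m - 1) ^ 2 /
      (4 * ((q : ℝ) - 1) ^ 4 * ((q : ℝ) + 1) ^ 2) ≤ Δ ∧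
    Δ ≤ (q : ℝ) ^ (2 * m + 5) * ((q : ℝ) ^ m - 1) ^ 2 /
      (8 * ((q : ℝ) - 1) ^ 4 * ((q : ℝ) + 1) ^ 2) := by
  have hQ : (16:ℝ) ≤ (q:ℝ) := by exact_mod_cast hq
  set Q : ℝ := (q:ℝ) with hQdef
  have hQ1 : (1:ℝ) < Q := by linarith
  set y : ℝ := Q ^ (m - 1) with hydef
  have h1 : Q ^ m = Q * y := by
    rw [hydef, ← pow_succ']
    congr 1
    omega
  have h2 : Q ^ (m + 1) = Q * (Q * y) := by rw [pow_succ, h1]; ring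
  have h3 : Q ^ (2 * m) = (Q * y) ^ 2 := by rw [two_mul, pow_add, h1]; ring
  have h4 : Q ^ (2 * m + 4) = (Q * y) ^ 2 * Q ^ 4 := by rw [pow_add, h3]
  have h5 : Q ^ (2 * m + 5) = (Q * y) ^ 2 * Q ^ 5 := by rw [pow_add, h3]
  have hy : Q ^ 2 ≤ y := by
    rw [hydef]
    exact pow_le_pow_right₀ (by linarith) (by omega)
  have hne1 : Q - 1 ≠ 0 := by linarith
  have hne2 : Q + 1 ≠ 0 := by linarith
  have hx0 : (0:ℝ) ≤ Q * y := by positivity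
  have hD : (0:ℝ) ≤ (Q * y - 1) ^ 2 / (4 * (Q - 1) ^ 4 * (Q + 1) ^ 2) := by positivity
  set S : ℝ := (4 * y - Q * (Q * y) - Q * y + Q - 3) ^ 2
      + 8 * (Q - 1) ^ 2 * (Q + 1) ^ 2 * ((Q * y) ^ 2 + Q * y + 1) with hSdef
  have hfact : Δ = ((Q * y - 1) ^ 2 / (4 * (Q - 1) ^ 4 * (Q + 1) ^ 2)) * S := by
    rw [hΔ, hA, hB, hC, h1, h2, h3, hSdef]
    field_simp
    ring
  constructor
  · calc 7 * Q ^ (2 * m + 4) * (Q ^ m - 1) ^ 2 / (4 * (Q - 1) ^ 4 * (Q + 1) ^ 2)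
        = ((Q * y - 1) ^ 2 / (4 * (Q - 1) ^ 4 * (Q + 1) ^ 2)) * (7 * Q ^ 4 * (Q * y) ^ 2) := by
          rw [h4, h1]; field_simp
      _ ≤ ((Q * y - 1) ^ 2 / (4 * (Q - 1) ^ 4 * (Q + 1) ^ 2)) * S :=
          mul_le_mul_of_nonneg_left (key1 Q (Q * y) hQ hx0 _) hD
      _ = Δ := hfact.symm
  · calc Δ = ((Q * y - 1) ^ 2 / (4 * (Q - 1) ^ 4 * (Q + 1) ^ 2)) * S := hfact
      _ ≤ ((Q * y - 1) ^ 2 / (4 * (Q - 1) ^ 4 * (Q + 1) ^ 2)) * (Q ^ 5 * (Q * y) ^ 2 / 2) :=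
          mul_le_mul_of_nonneg_left (key2 Q y hQ hy) hD
      _ = Q ^ (2 * m + 5) * (Q ^ m - 1) ^ 2 / (8 * (Q - 1) ^ 4 * (Q + 1) ^ 2) := by
          rw [h5, h1]; field_simp; ring
end

section
/- Let q ≥ 16 and m ≥ 3 be integers, and let A, B, C, Δ be as follows: A = (1/2)((q^m-1)/(q-1))^2, B = ((q^m-1)/(2(q-1)^2(q+1)))(4q^{m-1} - q^{m+1} - q^m + q - 3), C = -(q^{2m}+q^m+1), Δ = B^2 - 4AC. If t is a real number with t = (-B + √Δ)/(2A), then q ≤ t ≤ q^{3/2}. -/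
set_option maxHeartbeats 1600000 in
/-- the root t = (-B + √Δ)/(2A) satisfies q ≤ t ≤ q^{3/2} for q ≥ 16, m ≥ 3. -/
theorem stmt3 (q m : ℕ) (hq : 16 ≤ q) (hm : 3 ≤ m)
    (A B C Δ t : ℝ)
    (hA : A = (1 / 2) * (((q : ℝ) ^ m - 1) / ((q : ℝ) - 1)) ^ 2)
    (hB : B = (((q : ℝ) ^ m - 1) / (2 * ((q : ℝ) - 1) ^ 2 * ((q : ℝ) + 1))) *
      (4 * (q : ℝ) ^ (m - 1) - (q : ℝ) ^ (m + 1) - (q : ℝ) ^ m + (q : ℝ) - 3))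
    (hC : C = -((q : ℝ) ^ (2 * m) + (q : ℝ) ^ m + 1))
    (hΔ : Δ = B ^ 2 - 4 * A * C)
    (ht : t = (-B + Real.sqrt Δ) / (2 * A)) :
    (q : ℝ) ≤ t ∧ t ≤ (q : ℝ) ^ ((3 : ℝ) / 2) := by
  have hq16 : (16:ℝ) ≤ (q:ℝ) := by exact_mod_cast hq
  have hq1 : (1:ℝ) < (q:ℝ) := by linarith
  have hq0 : (0:ℝ) < (q:ℝ) := by linarith
  have hxy : (q:ℝ) ^ m = (q:ℝ) * (q:ℝ)^(m-1) := by
    rw [← pow_succ']; congr 1; omega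
  have hxm1 : (q:ℝ) ^ (m+1) = (q:ℝ) * (q:ℝ)^(m-1) * (q:ℝ) := by
    rw [pow_succ, hxy]
  have hx2m : (q:ℝ) ^ (2*m) = ((q:ℝ) * (q:ℝ)^(m-1))^2 := by
    rw [two_mul, pow_add, hxy]; ring
  rw [hxy] at hA
  rw [hxy, hxm1] at hB
  rw [hxy, hx2m] at hC
  have hym : (q:ℝ)^2 ≤ (q:ℝ)^(m-1) := pow_le_pow_right₀ (le_of_lt hq1) (by omega)
  generalize hY : (q:ℝ)^(m-1) = Y at hA hB hC hym
  clear hxy hxm1 hx2m hY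
  have hY0 : (0:ℝ) < Y := by nlinarith
  have hx1 : (1:ℝ) < (q:ℝ) * Y := by nlinarith
  -- powers of q facts
  have hp1 : (q:ℝ)*16 ≤ (q:ℝ)*(q:ℝ) := mul_le_mul_of_nonneg_left hq16 hq0.le
  have hp2 : (q:ℝ)^2*16 ≤ (q:ℝ)^2*(q:ℝ) := mul_le_mul_of_nonneg_left hq16 (pow_pos hq0 2).le
  have hp3 : (q:ℝ)^3*16 ≤ (q:ℝ)^3*(q:ℝ) := mul_le_mul_of_nonneg_left hq16 (pow_pos hq0 3).le
  have hp4 : (q:ℝ)^4*16 ≤ (q:ℝ)^4*(q:ℝ) := mul_le_mul_of_nonneg_left hq16 (pow_pos hq0 4).le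
  have hp5 : (q:ℝ)^5*16 ≤ (q:ℝ)^5*(q:ℝ) := mul_le_mul_of_nonneg_left hq16 (pow_pos hq0 5).le
  have hp6 : (q:ℝ)^6*16 ≤ (q:ℝ)^6*(q:ℝ) := mul_le_mul_of_nonneg_left hq16 (pow_pos hq0 6).le
  have hp7 : (q:ℝ)^7*16 ≤ (q:ℝ)^7*(q:ℝ) := mul_le_mul_of_nonneg_left hq16 (pow_pos hq0 7).le
  set s : ℝ := Real.sqrt q with hs
  have hs0 : 0 < s := Real.sqrt_pos.2 hq0
  have hs2 : s ^ 2 = (q:ℝ) := Real.sq_sqrt (le_of_lt hq0)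
  have hs4 : (4:ℝ) ≤ s := by
    have : Real.sqrt 16 ≤ s := Real.sqrt_le_sqrt hq16
    rwa [show (16:ℝ) = 4^2 by norm_num, Real.sqrt_sq (by norm_num)] at this
  have hd1 : (q:ℝ) - 1 ≠ 0 := by linarith
  have hd2 : (q:ℝ) + 1 ≠ 0 := by linarith
  have hA0 : 0 < A := by
    rw [hA]
    exact mul_pos (by norm_num) (pow_pos (div_pos (by nlinarith) (by linarith)) 2)
  have hfz : ∀ z : ℝ, A * z^2 + B * z + C =
      (((q:ℝ)*Y-1)^2 * ((q:ℝ)+1) * z^2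
        + ((q:ℝ)*Y-1) * (4*Y - (q:ℝ)*Y*(q:ℝ) - (q:ℝ)*Y + (q:ℝ) - 3) * z
        - 2*((q:ℝ)-1)^2*((q:ℝ)+1) * (((q:ℝ)*Y)^2 + (q:ℝ)*Y + 1))
      / (2*((q:ℝ)-1)^2*((q:ℝ)+1)) := by
    intro z
    rw [hA, hB, hC]
    field_simp
    ring
  have hD0 : (0:ℝ) < 2*((q:ℝ)-1)^2*((q:ℝ)+1) := by positivity
  -- f(q) ≤ 0, via explicit certificate
  have hc2a : (0:ℝ) ≤ (q:ℝ)^3 - 2*(q:ℝ)^2 - (q:ℝ) - 2 := by linarith [hp1, hp2]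
  have h1a : (0:ℝ) ≤ (Y - (q:ℝ)^2) * Y * (q:ℝ)^2 * ((q:ℝ)^3 - 2*(q:ℝ)^2 - (q:ℝ) - 2) :=
    mul_nonneg (mul_nonneg (mul_nonneg (by linarith) hY0.le) (sq_nonneg _)) hc2a
  have h2a : (0:ℝ) ≤ Y * ((q:ℝ)^7 - 2*(q:ℝ)^6 - (q:ℝ)^5 + 2*(q:ℝ)^4 - 2*(q:ℝ)^3 + 6*(q:ℝ)) :=
    mul_nonneg hY0.le (by linarith [hp1, hp2, hp3, hp4, hp5, hp6, hp7])
  have h3a : (0:ℝ) ≤ (q:ℝ)^3 - 2*(q:ℝ)^2 - 5*(q:ℝ) + 2 := by linarith [hp1, hp2]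
  have hN1 : ((q:ℝ)*Y-1)^2 * ((q:ℝ)+1) * (q:ℝ)^2
        + ((q:ℝ)*Y-1) * (4*Y - (q:ℝ)*Y*(q:ℝ) - (q:ℝ)*Y + (q:ℝ) - 3) * (q:ℝ)
        - 2*((q:ℝ)-1)^2*((q:ℝ)+1) * (((q:ℝ)*Y)^2 + (q:ℝ)*Y + 1) ≤ 0 := by
    have hid : ((q:ℝ)*Y-1)^2 * ((q:ℝ)+1) * (q:ℝ)^2
        + ((q:ℝ)*Y-1) * (4*Y - (q:ℝ)*Y*(q:ℝ) - (q:ℝ)*Y + (q:ℝ) - 3) * (q:ℝ)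
        - 2*((q:ℝ)-1)^2*((q:ℝ)+1) * (((q:ℝ)*Y)^2 + (q:ℝ)*Y + 1)
        = -((Y - (q:ℝ)^2) * Y * (q:ℝ)^2 * ((q:ℝ)^3 - 2*(q:ℝ)^2 - (q:ℝ) - 2)
          + Y * ((q:ℝ)^7 - 2*(q:ℝ)^6 - (q:ℝ)^5 + 2*(q:ℝ)^4 - 2*(q:ℝ)^3 + 6*(q:ℝ))
          + ((q:ℝ)^3 - 2*(q:ℝ)^2 - 5*(q:ℝ) + 2)) := by ring
    rw [hid]
    exact neg_nonpos.2 (add_nonneg (add_nonneg h1a h2a) h3a)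
  have hfq : A * (q:ℝ)^2 + B * (q:ℝ) + C ≤ 0 := by
    rw [hfz]
    exact div_nonpos_iff.2 (Or.inr ⟨hN1, hD0.le⟩)
  clear hN1 h1a h2a h3a hc2a
  -- f(s^3) ≥ 0
  have hs3 : s^3 = (q:ℝ) * s := by
    have : s^3 = s^2 * s := by ring
    rw [this, hs2]
  have hs6 : (s^3)^2 = (q:ℝ)^3 := by
    have : (s^3)^2 = (s^2)^3 := by ring
    rw [this, hs2]
  have h4s : 4 * s ≤ (q:ℝ) := by nlinarith [mul_le_mul_of_nonneg_right hs4 hs0.le]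
  -- certificate for G := T1 + c*(q/4) ≥ 0
  have hg1 : (0:ℝ) ≤ (Y - (q:ℝ)^2) * Y * (4*(q:ℝ)^6 - 5*(q:ℝ)^5 + 7*(q:ℝ)^4 + 12*(q:ℝ)^3 - 8*(q:ℝ)^2) :=
    mul_nonneg (mul_nonneg (by linarith) hY0.le) (by linarith [hp2, hp3, hp4, hp5])
  have hg2 : (0:ℝ) ≤ Y * (4*(q:ℝ)^8 - 5*(q:ℝ)^7 + 7*(q:ℝ)^6 + 4*(q:ℝ)^5 - 22*(q:ℝ)^4 + 6*(q:ℝ)^3 + 4*(q:ℝ)^2 - 8*(q:ℝ)) :=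
    mul_nonneg hY0.le (by linarith [hp1, hp2, hp3, hp4, hp5, hp6, hp7])
  have hg3 : (0:ℝ) ≤ 4*(q:ℝ)^4 - 5*(q:ℝ)^3 + 11*(q:ℝ)^2 + 8*(q:ℝ) - 8 := by
    linarith [hp1, hp2, hp3]
  have hG : 0 ≤ ((q:ℝ)*Y-1)^2 * ((q:ℝ)+1) * (q:ℝ)^3
        + ((q:ℝ)*Y-1) * (4*Y - (q:ℝ)*Y*(q:ℝ) - (q:ℝ)*Y + (q:ℝ) - 3) * (q:ℝ) * ((q:ℝ)/4)
        - 2*((q:ℝ)-1)^2*((q:ℝ)+1) * (((q:ℝ)*Y)^2 + (q:ℝ)*Y + 1) := by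
    have hid : ((q:ℝ)*Y-1)^2 * ((q:ℝ)+1) * (q:ℝ)^3
        + ((q:ℝ)*Y-1) * (4*Y - (q:ℝ)*Y*(q:ℝ) - (q:ℝ)*Y + (q:ℝ) - 3) * (q:ℝ) * ((q:ℝ)/4)
        - 2*((q:ℝ)-1)^2*((q:ℝ)+1) * (((q:ℝ)*Y)^2 + (q:ℝ)*Y + 1)
        = ((Y - (q:ℝ)^2) * Y * (4*(q:ℝ)^6 - 5*(q:ℝ)^5 + 7*(q:ℝ)^4 + 12*(q:ℝ)^3 - 8*(q:ℝ)^2)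
          + Y * (4*(q:ℝ)^8 - 5*(q:ℝ)^7 + 7*(q:ℝ)^6 + 4*(q:ℝ)^5 - 22*(q:ℝ)^4 + 6*(q:ℝ)^3 + 4*(q:ℝ)^2 - 8*(q:ℝ))
          + (4*(q:ℝ)^4 - 5*(q:ℝ)^3 + 11*(q:ℝ)^2 + 8*(q:ℝ) - 8)) / 4 := by ring
    rw [hid]
    exact div_nonneg (add_nonneg (add_nonneg hg1 hg2) hg3) (by norm_num)
  have hc : ((q:ℝ)*Y-1) * (4*Y - (q:ℝ)*Y*(q:ℝ) - (q:ℝ)*Y + (q:ℝ) - 3) * (q:ℝ) ≤ 0 := by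
    have hP : 4*Y - (q:ℝ)*Y*(q:ℝ) - (q:ℝ)*Y + (q:ℝ) - 3 ≤ 0 := by
      nlinarith [mul_le_mul_of_nonneg_right (show (4:ℝ) ≤ (q:ℝ)*(q:ℝ) by nlinarith) hY0.le, hx1]
    have := mul_nonpos_of_nonneg_of_nonpos (le_of_lt (by linarith : (0:ℝ) < (q:ℝ)*Y-1)) hP
    exact mul_nonpos_of_nonpos_of_nonneg this hq0.le
  have hsq : s ≤ (q:ℝ)/4 := by linarith
  have hkey := mul_le_mul_of_nonpos_left hsq hc
  have hN2 : 0 ≤ ((q:ℝ)*Y-1)^2 * ((q:ℝ)+1) * (s^3)^2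
        + ((q:ℝ)*Y-1) * (4*Y - (q:ℝ)*Y*(q:ℝ) - (q:ℝ)*Y + (q:ℝ) - 3) * (s^3)
        - 2*((q:ℝ)-1)^2*((q:ℝ)+1) * (((q:ℝ)*Y)^2 + (q:ℝ)*Y + 1) := by
    rw [hs6, hs3]
    refine le_of_le_of_eq (add_nonneg hG (sub_nonneg.2 hkey)) ?_
    ring
  have hfs : 0 ≤ A * (s^3)^2 + B * (s^3) + C := by
    rw [hfz]
    exact div_nonneg hN2 hD0.le
  clear hN2 hG hkey hg1 hg2 hg3 hc hfz
  -- lower bound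
  have hΔlb : (2*A*(q:ℝ) + B)^2 ≤ Δ := by
    rw [hΔ]
    linarith [mul_nonneg hA0.le (neg_nonneg.2 hfq)]
  have hsqrt1 : 2*A*(q:ℝ) + B ≤ Real.sqrt Δ := by
    have h := Real.sqrt_le_sqrt hΔlb
    rw [Real.sqrt_sq_eq_abs] at h
    exact le_trans (le_abs_self _) h
  have hC0 : C < 0 := by rw [hC]; nlinarith [hx1]
  have hs3pos : 0 < s^3 := by positivity
  have hAB : 0 ≤ A * s^3 + B := by
    nlinarith [hfs, hC0, hs3pos]
  have hΔub : Δ ≤ (2*A*(s^3) + B)^2 := by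
    rw [hΔ]
    linarith [mul_nonneg hA0.le hfs]
  have hsqrt2 : Real.sqrt Δ ≤ 2*A*(s^3) + B := by
    have h := Real.sqrt_le_sqrt hΔub
    rwa [Real.sqrt_sq (by linarith [hAB, mul_pos hA0 hs3pos])] at h
  constructor
  · rw [ht, le_div_iff₀ (by positivity)]
    linarith
  · have h32 : (q:ℝ) ^ ((3:ℝ)/2) = s^3 := by
      rw [show (3:ℝ)/2 = (1/2)*3 by norm_num, Real.rpow_mul (le_of_lt hq0),
        ← Real.sqrt_eq_rpow, show (3:ℝ) = ((3:ℕ):ℝ) by norm_num, Real.rpow_natCast]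
    rw [ht, h32, div_le_iff₀ (by positivity)]
    linarith
end

section
/- Let P be a finite projective plane structure on the point set of PG(2, Q) (Q = q^m a prime power), and let L_1, ..., L_t be pairwise disjoint sets of points such that every line ℓ of PG(2, Q) satisfies exactly one of: (a) there is a unique i with |ℓ ∩ L_i| ≥ 2 and ℓ ∩ L_j = ∅ for j ≠ i; or (b) there are exactly two indices i_1 ≠ i_2 with |ℓ ∩ L_{i_1}| = |ℓ ∩ L_{i_2}| = 1 and ℓ ∩ L_j = ∅ otherwise. Then B = L_1 ∪ ... ∪ L_t is a 2-fold blocking set of PG(2, Q) (every line meets B in at least 2 points), and B is minimal: for every point P ∈ B there exists a line through P meeting B in exactly 2 points, provided t ≥ 2 and each L_i is nonempty. -/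
open Finset

/-- pairwise disjoint point sets L₁,…,L_t in PG(2, Q) such that every line
either meets a unique Lᵢ in ≥ 2 points (and misses the others), or meets exactly two of
them in exactly one point each (and misses the others), have union a minimal 2-fold
blocking set (minimality provided t ≥ 2 and each Lᵢ is nonempty). -/
theorem stmt13 (q m t : ℕ) (hq : 2 ≤ q) (hm : 1 ≤ m)
    (P L : Type) [Membership P L] [Configuration.ProjectivePlane P L]
    [Fintype P] [Fintype L] [DecidableEq P] [∀ ℓ : L, DecidablePred (· ∈ ℓ)]
    (horder : Configuration.ProjectivePlane.order P L = q ^ m)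
    (Li : Fin t → Finset P)
    (hdisj : ∀ i j : Fin t, i ≠ j → Disjoint (Li i) (Li j))
    (hlines : ∀ ℓ : L,
      (∃ i : Fin t, 2 ≤ ((Li i).filter (· ∈ ℓ)).card ∧
        ∀ j : Fin t, j ≠ i → ((Li j).filter (· ∈ ℓ)).card = 0) ∨
      (∃ i₁ i₂ : Fin t, i₁ ≠ i₂ ∧ ((Li i₁).filter (· ∈ ℓ)).card = 1 ∧
        ((Li i₂).filter (· ∈ ℓ)).card = 1 ∧
        ∀ j : Fin t, j ≠ i₁ → j ≠ i₂ → ((Li j).filter (· ∈ ℓ)).card = 0)) :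
    (∀ ℓ : L, 2 ≤ (((univ : Finset (Fin t)).biUnion Li).filter (· ∈ ℓ)).card) ∧
    (2 ≤ t → (∀ i : Fin t, (Li i).Nonempty) →
      ∀ p ∈ (univ : Finset (Fin t)).biUnion Li,
        ∃ ℓ : L, p ∈ ℓ ∧ (((univ : Finset (Fin t)).biUnion Li).filter (· ∈ ℓ)).card = 2) := by
  have key : ∀ ℓ : L, (((univ : Finset (Fin t)).biUnion Li).filter (· ∈ ℓ)).card
      = ∑ i : Fin t, ((Li i).filter (· ∈ ℓ)).card := by
    intro ℓ
    rw [filter_biUnion, card_biUnion]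
    intro i _ j _ hij
    exact (hdisj i j hij).mono (filter_subset _ _) (filter_subset _ _)
  constructor
  · intro ℓ
    rw [key]
    rcases hlines ℓ with ⟨i, hi, _⟩ | ⟨i₁, i₂, h12, h1, h2, _⟩
    · exact hi.trans (Finset.single_le_sum (f := fun k => ((Li k).filter (· ∈ ℓ)).card) (fun _ _ => Nat.zero_le _) (mem_univ i))
    · calc 2 = ∑ k ∈ ({i₁, i₂} : Finset (Fin t)), ((Li k).filter (· ∈ ℓ)).card := by
              rw [Finset.sum_pair h12, h1, h2]
        _ ≤ _ := Finset.sum_le_sum_of_subset (subset_univ _)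
  · intro _ht hne p hp
    obtain ⟨i, _, hpi⟩ := Finset.mem_biUnion.mp hp
    obtain ⟨j, hji⟩ : ∃ j : Fin t, j ≠ i := by
      exact Fintype.exists_ne_of_one_lt_card (by rwa [Fintype.card_fin]) i
    obtain ⟨r, hr⟩ := hne j
    have hpr : p ≠ r := fun h => Finset.disjoint_left.mp (hdisj i j hji.symm) hpi (h ▸ hr)
    refine ⟨Configuration.HasLines.mkLine (L := L) hpr, (Configuration.HasLines.mkLine_ax (L := L) hpr).1, ?_⟩
    set ℓ := Configuration.HasLines.mkLine (L := L) hpr with hℓ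
    have hpℓ : p ∈ ℓ := (Configuration.HasLines.mkLine_ax (L := L) hpr).1
    have hrℓ : r ∈ ℓ := (Configuration.HasLines.mkLine_ax (L := L) hpr).2
    have hfi : ((Li i).filter (· ∈ ℓ)).card ≠ 0 :=
      Finset.card_ne_zero_of_mem (mem_filter.mpr ⟨hpi, hpℓ⟩)
    have hfj : ((Li j).filter (· ∈ ℓ)).card ≠ 0 :=
      Finset.card_ne_zero_of_mem (mem_filter.mpr ⟨hr, hrℓ⟩)
    rw [key]
    rcases hlines ℓ with ⟨k, _, hk⟩ | ⟨i₁, i₂, h12, h1, h2, hz⟩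
    · exfalso
      rcases eq_or_ne i k with rfl | h
      · exact hfj (hk j hji)
      · exact hfi (hk i h)
    · calc (∑ k : Fin t, ((Li k).filter (· ∈ ℓ)).card)
          = ∑ k ∈ ({i₁, i₂} : Finset (Fin t)), ((Li k).filter (· ∈ ℓ)).card :=
            (Finset.sum_subset (subset_univ _) (fun k _ hk => by
              simp only [mem_insert, mem_singleton, not_or] at hk
              exact hz k hk.1 hk.2)).symm
        _ = 2 := by rw [Finset.sum_pair h12, h1, h2]
end

section
/- Let V be a k-dimensional F_{q^m}-vector space with the standard scalar product, ⊥ the F_{q^m}-orthogonal complement and ⊥' the F_q-orthogonal complement induced by composing with the trace Tr_{q^m/q}. Let U be an F_q-subspace of V with dim_{F_q}(U) = n, and let v ∈ V be nonzero. Then dim_{F_q}(U ∩ v^⊥) = n - m + dim_{F_q}(U^{⊥'} ∩ ⟨v⟩_{F_{q^m}}). -/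
open Finset

/-- with the standard scalar product on V = F_{q^m}^k,
dim_{F_q}(U ∩ v^⊥) = n - m + dim_{F_q}(U^{⊥'} ∩ ⟨v⟩_{F_{q^m}}). -/
theorem stmt15 (q m k n : ℕ) (hq : ∃ p r : ℕ, p.Prime ∧ 0 < r ∧ q = p ^ r)
    (F K : Type) [Field F] [Field K] [Algebra F K] [Fintype F] [Fintype K]
    (hF : Fintype.card F = q) (hK : Fintype.card K = q ^ m)
    (hm : Module.finrank F K = m)
    (U : Submodule F (Fin k → K)) (hn : Module.finrank F U = n)
    (perpF : Submodule F (Fin k → K) → Submodule F (Fin k → K))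
    (hperpF : ∀ T : Submodule F (Fin k → K),
      (perpF T : Set (Fin k → K)) =
        {y : Fin k → K | ∀ w ∈ T, Algebra.trace F K (∑ i, y i * w i) = 0})
    (v : Fin k → K) (hv : v ≠ 0)
    (W : Submodule K (Fin k → K))
    (hW : (W : Set (Fin k → K)) = {y : Fin k → K | ∑ i, v i * y i = 0}) :
    (Module.finrank F ↥(U ⊓ W.restrictScalars F) : ℤ) =
      (n : ℤ) - m +
        (Module.finrank F ↥(perpF U ⊓ (Submodule.span K {v}).restrictScalars F) : ℤ) := by
  classical
  haveI : FiniteDimensional F K := Module.Finite.of_finite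
  haveI : FiniteDimensional F (Fin k → K) := Module.Finite.of_finite
  -- the trace bilinear form
  set B : LinearMap.BilinForm F (Fin k → K) :=
    LinearMap.mk₂ F (fun x y => Algebra.trace F K (∑ i, x i * y i))
      (fun x x' y => by
        rw [← map_add, ← Finset.sum_add_distrib]
        simp [add_mul])
      (fun c x y => by
        change Algebra.trace F K (∑ i, (c • x) i * y i) =
          c • Algebra.trace F K (∑ i, x i * y i)
        rw [← map_smul, Finset.smul_sum]
        congr 1
        exact Finset.sum_congr rfl fun i _ => by
          rw [Pi.smul_apply, smul_mul_assoc])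
      (fun x y y' => by
        rw [← map_add, ← Finset.sum_add_distrib]
        simp [mul_add])
      (fun c x y => by
        change Algebra.trace F K (∑ i, x i * (c • y) i) =
          c • Algebra.trace F K (∑ i, x i * y i)
        rw [← map_smul, Finset.smul_sum]
        congr 1
        exact Finset.sum_congr rfl fun i _ => by
          rw [Pi.smul_apply, mul_smul_comm])
    with hB
  have Bapp : ∀ x y, B x y = Algebra.trace F K (∑ i, x i * y i) := fun _ _ => rfl
  have Bsymm : ∀ x y, B x y = B y x := by
    intro x y; simp only [Bapp]; congr 1
    exact Finset.sum_congr rfl fun i _ => mul_comm _ _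
  have Brefl : B.IsRefl := fun x y h => by rw [Bsymm]; exact h
  have Bnd : B.Nondegenerate := by
    refine (fun hL : B.SeparatingLeft => ⟨hL, fun y hy => hL y (fun x => by rw [Bsymm]; exact hy x)⟩) ?_
    intro x hx
    funext i
    refine (traceForm_nondegenerate F K).1 (x i) (fun c => ?_)
    rw [Algebra.traceForm_apply]
    have := hx (Pi.single i c)
    rw [Bapp] at this
    simpa [Pi.single_apply, mul_ite, Finset.sum_ite_eq'] using this
  -- perpF is the B-orthogonal complement
  have hperp : ∀ T : Submodule F (Fin k → K), perpF T = B.orthogonal T := by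
    intro T
    apply SetLike.ext'
    rw [hperpF]
    ext y
    simp only [Set.mem_setOf_eq, SetLike.mem_coe,
      LinearMap.BilinForm.mem_orthogonal_iff, LinearMap.BilinForm.isOrtho_def]
    constructor
    · intro h w hw; rw [Bsymm, Bapp]; exact h w hw
    · intro h w hw; have := h w hw; rw [Bsymm, Bapp] at this; exact this
  -- W is the kernel of the functional y ↦ ∑ v i * y i
  let φ : (Fin k → K) →ₗ[K] K :=
    { toFun := fun y => ∑ i, v i * y i
      map_add' := fun a b => by simp [mul_add, Finset.sum_add_distrib]
      map_smul' := fun c a => by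
        simp only [Pi.smul_apply, smul_eq_mul, RingHom.id_apply, Finset.mul_sum]
        exact Finset.sum_congr rfl fun i _ => by ring }
  have hWker : W = LinearMap.ker φ := by
    apply SetLike.ext'
    rw [hW]
    ext y
    simp only [Set.mem_setOf_eq, SetLike.mem_coe, LinearMap.mem_ker]
    rfl
  obtain ⟨j, hj⟩ : ∃ j, v j ≠ 0 := by
    by_contra h; push_neg at h; exact hv (funext h)
  have hrange : LinearMap.range φ = ⊤ := by
    rw [LinearMap.range_eq_top]
    intro c
    refine ⟨Pi.single j ((v j)⁻¹ * c), ?_⟩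
    have : φ (Pi.single j ((v j)⁻¹ * c)) =
        ∑ i, v i * (Pi.single j ((v j)⁻¹ * c) : Fin k → K) i := rfl
    rw [this, Finset.sum_eq_single j]
    · rw [Pi.single_eq_same, ← mul_assoc, mul_inv_cancel₀ hj, one_mul]
    · intro b _ hb; rw [Pi.single_eq_of_ne hb, mul_zero]
    · intro h; exact absurd (Finset.mem_univ j) h
  have hWrankK : Module.finrank K ↥W + 1 = k := by
    have h1 := LinearMap.finrank_range_add_finrank_ker φ
    rw [hrange, finrank_top, Module.finrank_self, Module.finrank_pi,
      Fintype.card_fin] at h1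
    rw [hWker]
    omega
  -- finrank over F of restricted scalars
  have hres : ∀ (T : Submodule K (Fin k → K)),
      Module.finrank F ↥(T.restrictScalars F) = m * Module.finrank K ↥T := by
    intro T
    rw [LinearEquiv.finrank_eq
      ((Submodule.restrictScalarsEquiv F K (Fin k → K) T).restrictScalars F),
      ← Module.finrank_mul_finrank F K ↥T, hm]
  have hWrankF : Module.finrank F ↥(W.restrictScalars F) = m * Module.finrank K ↥W :=
    hres W
  have hspanF : Module.finrank F ↥((Submodule.span K {v}).restrictScalars F) = m := by
    rw [hres, finrank_span_singleton hv, mul_one]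
  have hV : Module.finrank F (Fin k → K) = k * m := by
    rw [Module.finrank_pi_fintype F]
    simp [hm, Finset.sum_const, mul_comm]
  -- dimension of any orthogonal complement
  have horthdim : ∀ T : Submodule F (Fin k → K),
      Module.finrank F ↥T + Module.finrank F ↥(B.orthogonal T) =
        Module.finrank F (Fin k → K) := by
    intro T
    have h2 := LinearMap.BilinForm.finrank_add_finrank_orthogonal Brefl T
    rwa [LinearMap.BilinForm.orthogonal_top_eq_bot Bnd, inf_bot_eq, finrank_bot, add_zero] at h2
  -- the orthogonal of W is the K-span of v
  have hle : (Submodule.span K {v}).restrictScalars F ≤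
      B.orthogonal (W.restrictScalars F) := by
    intro y hy
    rw [Submodule.restrictScalars_mem, Submodule.mem_span_singleton] at hy
    obtain ⟨c, rfl⟩ := hy
    refine LinearMap.BilinForm.mem_orthogonal_iff.mpr (fun w hw => ?_)
    rw [Submodule.restrictScalars_mem] at hw
    have hw0 : ∑ i, v i * w i = 0 := by
      have hmem : w ∈ (W : Set (Fin k → K)) := hw
      rw [hW] at hmem
      exact hmem
    rw [Bapp]
    have e : ∑ i, w i * (c • v) i = c * ∑ i, v i * w i := by
      rw [Finset.mul_sum]
      exact Finset.sum_congr rfl fun i _ => by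
        rw [Pi.smul_apply, smul_eq_mul]; ring
    rw [e, hw0, mul_zero, map_zero]
  have horthW : B.orthogonal (W.restrictScalars F) =
      (Submodule.span K {v}).restrictScalars F := by
    symm
    apply Submodule.eq_of_le_of_finrank_le hle
    rw [hspanF]
    have h3 := horthdim (W.restrictScalars F)
    rw [hV, hWrankF] at h3
    have e : k * m = m * Module.finrank K ↥W + m := by
      conv_lhs => rw [← hWrankK]
      ring
    omega
  -- orthogonal of a sup is the inf of orthogonals
  have horthsup : B.orthogonal (U ⊔ W.restrictScalars F) =
      B.orthogonal U ⊓ B.orthogonal (W.restrictScalars F) := by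
    ext x
    simp only [Submodule.mem_inf, LinearMap.BilinForm.mem_orthogonal_iff]
    constructor
    · intro h
      exact ⟨fun a ha => h a (Submodule.mem_sup_left ha),
        fun b hb => h b (Submodule.mem_sup_right hb)⟩
    · rintro ⟨h1, h2⟩ z hz
      obtain ⟨a, ha, b, hb, rfl⟩ := Submodule.mem_sup.mp hz
      have e1 : B a x = 0 := h1 a ha
      have e2 : B b x = 0 := h2 b hb
      show B (a + b) x = 0
      rw [map_add, LinearMap.add_apply, e1, e2, add_zero]
  -- put everything together
  have hsum := Submodule.finrank_sup_add_finrank_inf_eq U (W.restrictScalars F)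
  rw [hn, hWrankF] at hsum
  have h2 := horthdim (U ⊔ W.restrictScalars F)
  rw [horthsup, horthW, hV] at h2
  rw [hperp U]
  have e : k * m = m * Module.finrank K ↥W + m := by
    conv_lhs => rw [← hWrankK]
    ring
  rw [e] at h2
  set S := Module.finrank F ↥(U ⊔ W.restrictScalars F)
  set A := Module.finrank F ↥(U ⊓ W.restrictScalars F)
  set X := Module.finrank F
    ↥(B.orthogonal U ⊓ (Submodule.span K {v}).restrictScalars F)
  set d := Module.finrank K ↥W
  have hz1 : (S : ℤ) + A = n + m * d := by exact_mod_cast hsum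
  have hz2 : (S : ℤ) + X = m * d + m := by exact_mod_cast h2
  linarith
end
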